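/- Let m > 3 and let Δ = (a₁, …, a_m) be a sequence of nonzero vectors in ℤ² with a₁ + … + a_m = 0 which spans ℝ², ordered cyclically so that the arguments arg(a_k) ∈ [0, 2π) are nondecreasing in k (indices taken modulo m). Let i be an index such that a_i is not collinear with a_{i−1} or a_i is not collinear with a_{i+1}, and let j be an integer with 1 ≤ j ≤ m − 3. Then there exists an index k such that the cyclic block a_k, a_{k+1}, …, a_{k+j} (of j + 1 consecutive vectors, indices modulo m) contains a_i, the vectors of the block span ℝ², their sum a' = a_k + … + a_{k+j} is nonzero, and the sequence Δ' obtained from Δ by removing the block and appending a' consists of nonzero vectors, sums to 0, and spans ℝ². -/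

import Mathlib

/-- The wedge product `a ∧ b = a₁b₂ − a₂b₁` of two vectors (here in `ℤ²`). -/
def wedge (a b : ℤ × ℤ) : ℤ := a.1 * b.2 - a.2 * b.1

/-- The argument in `[0, 2π)` of a vector `a ∈ ℤ²`, viewed as the complex number
`a¹ + i·a²`. -/
noncomputable def arg2pi (a : ℤ × ℤ) : ℝ :=
  if Complex.arg ((a.1 : ℂ) + (a.2 : ℂ) * Complex.I) < 0 then
    Complex.arg ((a.1 : ℂ) + (a.2 : ℂ) * Complex.I) + 2 * Real.pi
  else Complex.arg ((a.1 : ℂ) + (a.2 : ℂ) * Complex.I)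

/-- The inclusion `ℤ² → ℝ²`. -/
def toR (a : ℤ × ℤ) : ℝ × ℝ := ((a.1 : ℝ), (a.2 : ℝ))

/-- The clockwise rotation by `π/2`: `R(x, y) = (y, −x)`. -/
def rot (a : ℤ × ℤ) : ℤ × ℤ := (a.2, -a.1)

lemma wedge_self (x : ℤ × ℤ) : wedge x x = 0 := by simp [wedge]; ring

lemma wedge_anti (x y : ℤ × ℤ) : wedge y x = - wedge x y := by simp [wedge]; ring

lemma wedge_trans {x y z : ℤ × ℤ} (hxy : wedge x y = 0) (hyz : wedge y z = 0)
    (hy : y ≠ 0) : wedge x z = 0 := by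
  have h1 : y.1 * wedge x z = x.1 * wedge y z + z.1 * wedge x y := by
    simp only [wedge]; ring
  have h2 : y.2 * wedge x z = x.2 * wedge y z + z.2 * wedge x y := by
    simp only [wedge]; ring
  rw [hxy, hyz] at h1 h2
  simp only [mul_zero, add_zero] at h1 h2
  rcases mul_eq_zero.1 h1 with h | h
  · rcases mul_eq_zero.1 h2 with h' | h'
    · exact absurd (Prod.ext h h') hy
    · exact h'
  · exact h

lemma wedge_sum_left {ι : Type*} (s : Finset ι) (f : ι → ℤ × ℤ) (y : ℤ × ℤ) :
    wedge (∑ x ∈ s, f x) y = ∑ x ∈ s, wedge (f x) y := by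
  simp only [wedge, Prod.fst_sum, Prod.snd_sum, Finset.sum_mul, ← Finset.sum_sub_distrib]

lemma wedge_neg_left (x y : ℤ × ℤ) : wedge (-x) y = - wedge x y := by
  simp [wedge]; ring

lemma arg2pi_nonneg (z : ℤ × ℤ) : 0 ≤ arg2pi z := by
  unfold arg2pi
  split_ifs with h
  · have := Complex.neg_pi_lt_arg ((z.1 : ℂ) + (z.2 : ℂ) * Complex.I)
    have hpi := Real.pi_pos
    linarith
  · linarith [not_lt.1 h]

lemma arg2pi_lt_two_pi (z : ℤ × ℤ) : arg2pi z < 2 * Real.pi := by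
  unfold arg2pi
  have h1 := Complex.arg_le_pi ((z.1 : ℂ) + (z.2 : ℂ) * Complex.I)
  have hpi := Real.pi_pos
  split_ifs with h <;> linarith

lemma toC_ne_zero {z : ℤ × ℤ} (hz : z ≠ 0) : ((z.1 : ℂ) + (z.2 : ℂ) * Complex.I) ≠ 0 := by
  intro h
  apply hz
  have hre : ((z.1 : ℂ) + (z.2 : ℂ) * Complex.I).re = (z.1 : ℝ) := by simp
  have him : ((z.1 : ℂ) + (z.2 : ℂ) * Complex.I).im = (z.2 : ℝ) := by simp
  rw [h] at hre him
  simp only [Complex.zero_re, Complex.zero_im] at hre him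
  have h1 : z.1 = 0 := by exact_mod_cast hre.symm
  have h2 : z.2 = 0 := by exact_mod_cast him.symm
  exact Prod.ext h1 h2

lemma wedge_eq_zero_of_arg2pi_eq {x y : ℤ × ℤ} (hx : x ≠ 0) (hy : y ≠ 0)
    (h : arg2pi x = arg2pi y) : wedge x y = 0 := by
  set zx : ℂ := (x.1 : ℂ) + (x.2 : ℂ) * Complex.I with hzx
  set zy : ℂ := (y.1 : ℂ) + (y.2 : ℂ) * Complex.I with hzy
  have hzx0 : zx ≠ 0 := toC_ne_zero hx
  have hzy0 : zy ≠ 0 := toC_ne_zero hy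
  have harg : Complex.arg zx = Complex.arg zy := by
    have h1 := Complex.neg_pi_lt_arg zx
    have h2 := Complex.arg_le_pi zx
    have h3 := Complex.neg_pi_lt_arg zy
    have h4 := Complex.arg_le_pi zy
    have hpi := Real.pi_pos
    unfold arg2pi at h
    rw [← hzx, ← hzy] at h
    split_ifs at h with ha hb hb <;> linarith
  rw [Complex.arg_eq_arg_iff hzx0 hzy0] at harg
  set c : ℝ := ‖zy‖ / ‖zx‖ with hc
  have hre : (y.1 : ℝ) = c * (x.1 : ℝ) := by
    have := congrArg Complex.re harg
    simpa [hzx, hzy, Complex.re_ofReal_mul] using this.symm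
  have him : (y.2 : ℝ) = c * (x.2 : ℝ) := by
    have := congrArg Complex.im harg
    simpa [hzx, hzy] using this.symm
  have : ((wedge x y : ℤ) : ℝ) = 0 := by
    simp only [wedge, Int.cast_sub, Int.cast_mul]
    rw [hre, him]; ring
  exact_mod_cast this

lemma span_top_of_wedge {x y : ℤ × ℤ} (h : wedge x y ≠ 0) {S : Set (ℝ × ℝ)}
    (hx : toR x ∈ S) (hy : toR y ∈ S) : Submodule.span ℝ S = ⊤ := by
  rw [eq_top_iff]
  rintro ⟨u, v⟩ -
  have hW : ((wedge x y : ℤ) : ℝ) ≠ 0 := Int.cast_ne_zero.2 h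
  set W : ℝ := ((wedge x y : ℤ) : ℝ) with hWdef
  have hWeq : W = (x.1 : ℝ) * (y.2 : ℝ) - (x.2 : ℝ) * (y.1 : ℝ) := by
    simp [hWdef, wedge]
  set c : ℝ := (u * (y.2 : ℝ) - v * (y.1 : ℝ)) / W with hc
  set d : ℝ := (v * (x.1 : ℝ) - u * (x.2 : ℝ)) / W with hd
  have key : c • toR x + d • toR y = (u, v) := by
    have e1 : (u * (y.2 : ℝ) - v * (y.1 : ℝ)) * (x.1 : ℝ)
        + (v * (x.1 : ℝ) - u * (x.2 : ℝ)) * (y.1 : ℝ) = u * W := by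
      rw [hWeq]; ring
    have e2 : (u * (y.2 : ℝ) - v * (y.1 : ℝ)) * (x.2 : ℝ)
        + (v * (x.1 : ℝ) - u * (x.2 : ℝ)) * (y.2 : ℝ) = v * W := by
      rw [hWeq]; ring
    have h1 : c * (x.1 : ℝ) + d * (y.1 : ℝ) = u := by
      rw [hc, hd, div_mul_eq_mul_div, div_mul_eq_mul_div, ← add_div, e1,
        mul_div_cancel_right₀ _ hW]
    have h2 : c * (x.2 : ℝ) + d * (y.2 : ℝ) = v := by
      rw [hc, hd, div_mul_eq_mul_div, div_mul_eq_mul_div, ← add_div, e2,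
        mul_div_cancel_right₀ _ hW]
    simp only [toR, Prod.smul_mk, smul_eq_mul, Prod.mk_add_mk]
    exact Prod.ext h1 h2
  rw [← key]
  exact Submodule.add_mem _
    (Submodule.smul_mem _ _ (Submodule.subset_span hx))
    (Submodule.smul_mem _ _ (Submodule.subset_span hy))

lemma wedge_sub_left (x y z : ℤ × ℤ) : wedge (x - y) z = wedge x z - wedge y z := by
  simp [wedge]; ring

lemma wedge_neg_right (x y : ℤ × ℤ) : wedge x (-y) = - wedge x y := by
  simp [wedge]; ring

lemma cyclic_sum {M : Type*} [AddCommGroup M] (m : ℕ) (hm : 0 < m) (f : ℕ → M) (k : ℕ) :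
    ∑ d ∈ Finset.range m, f ((k + d) % m) = ∑ t ∈ Finset.range m, f t := by
  induction k with
  | zero =>
    apply Finset.sum_congr rfl
    intro t ht
    rw [Nat.zero_add, Nat.mod_eq_of_lt (Finset.mem_range.1 ht)]
  | succ k ih =>
    rw [← ih]
    have h1 : ∑ d ∈ Finset.range m, f ((k + 1 + d) % m)
        = ∑ d ∈ Finset.range m, f ((k + (d + 1)) % m) := by
      apply Finset.sum_congr rfl; intro t _; ring_nf
    rw [h1]
    have h2 : ∑ d ∈ Finset.range m, f ((k + (d + 1)) % m) + f ((k + 0) % m)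
        = ∑ d ∈ Finset.range m, f ((k + d) % m) + f ((k + m) % m) := by
      rw [← Finset.sum_range_succ' (fun d => f ((k + d) % m)) m,
        Finset.sum_range_succ (fun d => f ((k + d) % m)) m]
    have h3 : (k + m) % m = (k + 0) % m := by
      simp [Nat.add_mod_right]
    rw [h3] at h2
    exact add_right_cancel h2

lemma cyc_inj {m : ℕ} (k : ℕ) {d e : ℕ} (hd : d < m) (he : e < m)
    (h : (k + d) % m = (k + e) % m) : d = e := by
  have h2 : d % m = e % m := by
    have := Nat.ModEq.add_left_cancel' k h
    exact this
  rwa [Nat.mod_eq_of_lt hd, Nat.mod_eq_of_lt he] at h2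

lemma cyc_image (m k : ℕ) (hm : 0 < m) :
    (Finset.range m).image (fun d => (k + d) % m) = Finset.range m := by
  apply Finset.eq_of_subset_of_card_le
  · intro x hx
    simp only [Finset.mem_image] at hx
    obtain ⟨d, _, rfl⟩ := hx
    exact Finset.mem_range.2 (Nat.mod_lt _ hm)
  · rw [Finset.card_image_of_injOn, Finset.card_range]
    intro d hd e he h
    exact cyc_inj k (Finset.mem_range.1 hd) (Finset.mem_range.1 he) h

/-- The key sliding-window lemma. -/
lemma key_window (b : ℕ → ℤ × ℤ) (n r : ℕ) (hr2 : 2 ≤ r) (hrn : r ≤ n)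
    (hbne : ∀ t < n, b t ≠ 0)
    (θ : ℕ → ℝ) (hmono : ∀ x y : ℕ, x ≤ y → y < n → θ x ≤ θ y)
    (hspread : θ (n - 1) - θ 0 < 2 * Real.pi)
    (hcong : ∀ x y : ℕ, x < n → y < n → b x = b y → ∃ g : ℤ, θ x - θ y = g * (2 * Real.pi))
    (hargw : ∀ x y : ℕ, x < n → y < n → θ x = θ y → wedge (b x) (b y) = 0)
    (hnd : ∃ u, u < n ∧ ∃ v, v < n ∧ wedge (b u) (b v) ≠ 0)
    (hsum : ∑ t ∈ Finset.range n, b t ≠ 0) :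
    ∃ s, s + r ≤ n ∧
      (∃ u v, s ≤ u ∧ u < s + r ∧ s ≤ v ∧ v < s + r ∧ wedge (b u) (b v) ≠ 0) ∧
      ∑ t ∈ Finset.Ico s (s + r), b t ≠ 0 := by
  classical
  -- step 1: some window is nondegenerate
  by_cases hdegall : ∀ s, s + r ≤ n →
      ∀ u v, s ≤ u → u < s + r → s ≤ v → v < s + r → wedge (b u) (b v) = 0
  · -- all windows degenerate: contradiction with hnd
    exfalso
    have adj : ∀ t, t + 1 < n → wedge (b t) (b (t + 1)) = 0 := by
      intro t ht
      rcases le_or_gt (t + r) n with hc | hc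
      · exact hdegall t hc t (t + 1) le_rfl (by omega) (by omega) (by omega)
      · exact hdegall (n - r) (by omega) t (t + 1) (by omega) (by omega) (by omega) (by omega)
    have chain : ∀ y, y < n → ∀ x, x ≤ y → wedge (b x) (b y) = 0 := by
      intro y
      induction y with
      | zero => intro _ x hx; interval_cases x; exact wedge_self _
      | succ y ih =>
        intro hy x hx
        rcases Nat.lt_or_ge x (y + 1) with h | h
        · have hxy : x ≤ y := by omega
          exact wedge_trans (ih (by omega) x hxy) (adj y hy) (hbne y (by omega))
        · have : x = y + 1 := by omega
          rw [this]; exact wedge_self _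
    obtain ⟨u, hu, v, hv, hw⟩ := hnd
    rcases le_or_gt u v with h | h
    · exact hw (chain v hv u h)
    · rw [wedge_anti] at hw
      rw [chain u hu v h.le] at hw
      exact hw (neg_zero)
  · push_neg at hdegall
    obtain ⟨s₀, hs₀n, u₀, v₀, hu₀l, hu₀r, hv₀l, hv₀r, hw₀⟩ := hdegall
    by_cases hS : ∑ t ∈ Finset.Ico s₀ (s₀ + r), b t ≠ 0
    · exact ⟨s₀, hs₀n, ⟨u₀, v₀, hu₀l, hu₀r, hv₀l, hv₀r, hw₀⟩, hS⟩
    push_neg at hS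
    -- window s₀ is nondegenerate but sums to zero
    have hpi := Real.pi_pos
    -- a helper: if θ is flat across the window, contradiction with nondegeneracy
    have theta_flat : ∀ x y : ℕ, x ≤ s₀ → s₀ + r ≤ y + 1 → y < n → θ x = θ y → False := by
      intro x y hx hy hyn hflat
      apply hw₀
      have hconst : ∀ t, s₀ ≤ t → t < s₀ + r → θ t = θ x := by
        intro t h1 h2
        have l1 := hmono x t (by omega) (by omega)
        have l2 := hmono t y (by omega) hyn
        linarith
      exact hargw u₀ v₀ (by omega) (by omega)
        (by rw [hconst u₀ hu₀l hu₀r, hconst v₀ hv₀l hv₀r])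
    -- equal endpoints force flat θ
    have eq_flat : ∀ x y : ℕ, x < y → y < n → b x = b y → θ x = θ y := by
      intro x y hxy hyn hbxy
      obtain ⟨g, hg⟩ := hcong x y (by omega) hyn hbxy
      have l1 : θ x ≤ θ y := hmono x y hxy.le hyn
      have l2 : θ 0 ≤ θ x := hmono 0 x (by omega) (by omega)
      have l3 : θ y ≤ θ (n - 1) := hmono y (n - 1) (by omega) (by omega)
      have hb1 : (g : ℝ) * (2 * Real.pi) ≤ 0 := by linarith
      have hb2 : (-(2 * Real.pi)) < (g : ℝ) * (2 * Real.pi) := by linarith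
      have hg0 : g = 0 := by
        by_contra hgne
        rcases lt_or_gt_of_ne hgne with h | h
        · have hg1 : g ≤ -1 := by omega
          have : (g : ℝ) ≤ -1 := by exact_mod_cast hg1
          nlinarith
        · have : (1 : ℝ) ≤ (g : ℝ) := by exact_mod_cast h
          nlinarith
      rw [hg0] at hg
      push_cast at hg
      linarith
    rcases lt_or_eq_of_le hs₀n with hlt | heqn
    · -- slide right: use window s₀ + 1
      have hbs : b s₀ = -∑ t ∈ Finset.Ico (s₀ + 1) (s₀ + r), b t := by
        rw [Finset.sum_eq_sum_Ico_succ_bot (show s₀ < s₀ + r by omega) b] at hS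
        exact eq_neg_of_add_eq_zero_left hS
      have hnewsum : ∑ t ∈ Finset.Ico (s₀ + 1) (s₀ + 1 + r), b t = b (s₀ + r) - b s₀ := by
        rw [show s₀ + 1 + r = (s₀ + r) + 1 by omega,
          Finset.sum_Ico_succ_top (show s₀ + 1 ≤ s₀ + r by omega) b]
        rw [Finset.sum_eq_sum_Ico_succ_bot (show s₀ < s₀ + r by omega) b] at hS
        have : ∑ t ∈ Finset.Ico (s₀ + 1) (s₀ + r), b t = -b s₀ :=
          eq_neg_of_add_eq_zero_right hS
        rw [this]; abel
      refine ⟨s₀ + 1, by omega, ?_, ?_⟩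
      · -- nondegenerate
        by_contra hdeg
        push_neg at hdeg
        apply hw₀
        have degold : ∀ u v, s₀ ≤ u → u < s₀ + r → s₀ ≤ v → v < s₀ + r →
            wedge (b u) (b v) = 0 := by
          have aux : ∀ v, s₀ + 1 ≤ v → v < s₀ + r → wedge (b s₀) (b v) = 0 := by
            intro v h1 h2
            rw [hbs, wedge_neg_left, wedge_sum_left]
            rw [Finset.sum_eq_zero, neg_zero]
            intro t ht
            rw [Finset.mem_Ico] at ht
            exact hdeg t v ht.1 (by omega) h1 (by omega)
          intro u v h1 h2 h3 h4
          rcases eq_or_lt_of_le h1 with hu | hu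
          · rcases eq_or_lt_of_le h3 with hv | hv
            · rw [← hu, ← hv]; exact wedge_self _
            · rw [← hu]; exact aux v hv h4
          · rcases eq_or_lt_of_le h3 with hv | hv
            · rw [← hv, wedge_anti, aux u hu h2, neg_zero]
            · exact hdeg u v hu (by omega) hv (by omega)
        exact degold u₀ v₀ hu₀l hu₀r hv₀l hv₀r
      · rw [hnewsum]
        intro hzero
        have hbeq : b s₀ = b (s₀ + r) := by
          have : b (s₀ + r) = b s₀ := by
            have := sub_eq_zero.1 hzero
            exact this
          exact this.symm
        exact theta_flat s₀ (s₀ + r) le_rfl (by omega) hlt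
          (eq_flat s₀ (s₀ + r) (by omega) hlt hbeq)
    · -- s₀ + r = n : slide left
      rcases Nat.eq_zero_or_pos s₀ with h0 | h0
      · exfalso
        apply hsum
        rw [Finset.range_eq_Ico]
        obtain rfl : r = n := by omega
        rw [h0] at hS
        simpa using hS
      obtain ⟨s₁, rfl⟩ : ∃ s₁, s₀ = s₁ + 1 := ⟨s₀ - 1, by omega⟩
      have hbt : b (s₁ + r) = -∑ t ∈ Finset.Ico (s₁ + 1) (s₁ + r), b t := by
        rw [show s₁ + 1 + r = (s₁ + r) + 1 by omega,
          Finset.sum_Ico_succ_top (show s₁ + 1 ≤ s₁ + r by omega) b] at hS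
        exact eq_neg_of_add_eq_zero_right hS
      have hnewsum : ∑ t ∈ Finset.Ico s₁ (s₁ + r), b t = b s₁ - b (s₁ + r) := by
        rw [Finset.sum_eq_sum_Ico_succ_bot (show s₁ < s₁ + r by omega) b]
        rw [show s₁ + 1 + r = (s₁ + r) + 1 by omega,
          Finset.sum_Ico_succ_top (show s₁ + 1 ≤ s₁ + r by omega) b] at hS
        have : ∑ t ∈ Finset.Ico (s₁ + 1) (s₁ + r), b t = -b (s₁ + r) :=
          eq_neg_of_add_eq_zero_left hS
        rw [this]; abel
      refine ⟨s₁, by omega, ?_, ?_⟩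
      · by_contra hdeg
        push_neg at hdeg
        apply hw₀
        have degold : ∀ u v, s₁ + 1 ≤ u → u < s₁ + 1 + r → s₁ + 1 ≤ v → v < s₁ + 1 + r →
            wedge (b u) (b v) = 0 := by
          have aux : ∀ v, s₁ + 1 ≤ v → v < s₁ + r → wedge (b (s₁ + r)) (b v) = 0 := by
            intro v h1 h2
            rw [hbt, wedge_neg_left, wedge_sum_left]
            rw [Finset.sum_eq_zero, neg_zero]
            intro t ht
            rw [Finset.mem_Ico] at ht
            exact hdeg t v (by omega) (by omega) (by omega) (by omega)
          intro u v h1 h2 h3 h4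
          rcases eq_or_lt_of_le (show u ≤ s₁ + r by omega) with hu | hu
          · rcases eq_or_lt_of_le (show v ≤ s₁ + r by omega) with hv | hv
            · rw [hu, hv]; exact wedge_self _
            · rw [hu]; exact aux v h3 hv
          · rcases eq_or_lt_of_le (show v ≤ s₁ + r by omega) with hv | hv
            · rw [hv, wedge_anti, aux u h1 hu, neg_zero]
            · exact hdeg u v (by omega) (by omega) (by omega) (by omega)
        exact degold u₀ v₀ hu₀l hu₀r hv₀l hv₀r
      · rw [hnewsum]
        intro hzero
        have hbeq : b s₁ = b (s₁ + r) := sub_eq_zero.1 hzero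
        exact theta_flat s₁ (s₁ + r) (by omega) (by omega) (by omega)
          (eq_flat s₁ (s₁ + r) (by omega) (by omega) hbeq)

lemma main_aux (m : ℕ) (hm : 3 < m) (a : ℕ → ℤ × ℤ)
    (hne : ∀ k < m, a k ≠ 0)
    (hbal : ∑ k ∈ Finset.range m, a k = 0)
    (hord : ∀ k l : ℕ, k ≤ l → l < m → arg2pi (a k) ≤ arg2pi (a l))
    (j : ℕ) (hj1 : 1 ≤ j) (hj2 : j ≤ m - 3)
    (p : ℕ) (hp : p < m)
    (hw : wedge (a p) (a ((p + 1) % m)) ≠ 0)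
    (i : ℕ) (hi : i = p ∨ i = (p + 1) % m)
    (hJnd : ∃ u, u < m - 2 ∧ ∃ v, v < m - 2 ∧
      wedge (a ((p + 2 + u) % m)) (a ((p + 2 + v) % m)) ≠ 0) :
    ∃ k < m,
      (∃ d ≤ j, (k + d) % m = i) ∧
      Submodule.span ℝ ((fun d => toR (a ((k + d) % m))) '' {d | d ≤ j}) = ⊤ ∧
      (∑ d ∈ Finset.range (j + 1), a ((k + d) % m)) ≠ 0 ∧
      (∀ s ∈ @Finset.filter _
          (fun s => ∀ d ∈ Finset.range (j + 1), s ≠ (k + d) % m)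
          (fun _ => Finset.decidableDforallFinset) (Finset.range m), a s ≠ 0) ∧
      ((∑ s ∈ @Finset.filter _
            (fun s => ∀ d ∈ Finset.range (j + 1), s ≠ (k + d) % m)
            (fun _ => Finset.decidableDforallFinset) (Finset.range m), a s) +
          ∑ d ∈ Finset.range (j + 1), a ((k + d) % m) = 0) ∧
      Submodule.span ℝ
        (insert (toR (∑ d ∈ Finset.range (j + 1), a ((k + d) % m)))
          ((fun s => toR (a s)) ''
            {s | s < m ∧ ∀ d ∈ Finset.range (j + 1), s ≠ (k + d) % m})) = ⊤ := by
  classical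
  have hm0 : 0 < m := by omega
  set n := m - 2 with hn
  set r := m - 1 - j with hr
  have hr2 : 2 ≤ r := by omega
  have hrn : r ≤ n := by omega
  have hrj : r + j + 1 = m := by omega
  set b : ℕ → ℤ × ℤ := fun t => a ((p + 2 + t) % m) with hb
  have hbne : ∀ t < n, b t ≠ 0 := fun t _ => hne _ (Nat.mod_lt _ hm0)
  have hmod2 : ∀ z, m ≤ z → z < 2 * m → z % m = z - m := by
    intro z h1 h2
    rw [Nat.mod_eq_sub_mod h1, Nat.mod_eq_of_lt (by omega)]
  set θ : ℕ → ℝ := fun t => if p + 2 + t < m then arg2pi (a ((p + 2 + t) % m))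
    else arg2pi (a ((p + 2 + t) % m)) + 2 * Real.pi with hθ
  have hpi := Real.pi_pos
  have hmono : ∀ x y : ℕ, x ≤ y → y < n → θ x ≤ θ y := by
    intro x y hxy hyn
    rw [hθ]
    dsimp only
    by_cases hy' : p + 2 + y < m
    · have hx' : p + 2 + x < m := by omega
      rw [if_pos hx', if_pos hy', Nat.mod_eq_of_lt hx', Nat.mod_eq_of_lt hy']
      exact hord _ _ (by omega) hy'
    · by_cases hx' : p + 2 + x < m
      · rw [if_pos hx', if_neg hy']
        have l1 := arg2pi_lt_two_pi (a ((p + 2 + x) % m))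
        have l2 := arg2pi_nonneg (a ((p + 2 + y) % m))
        linarith
      · rw [if_neg hx', if_neg hy']
        have e1 : (p + 2 + x) % m = p + 2 + x - m := hmod2 _ (by omega) (by omega)
        have e2 : (p + 2 + y) % m = p + 2 + y - m := hmod2 _ (by omega) (by omega)
        rw [e1, e2]
        have := hord (p + 2 + x - m) (p + 2 + y - m) (by omega) (by omega)
        linarith
  have hspread : θ (n - 1) - θ 0 < 2 * Real.pi := by
    rw [hθ]
    dsimp only
    by_cases hp0 : p + 2 + (n - 1) < m
    · have hq : p + 2 + 0 < m := by omega
      rw [if_pos hp0, if_pos hq]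
      have l1 := arg2pi_lt_two_pi (a ((p + 2 + (n - 1)) % m))
      have l2 := arg2pi_nonneg (a ((p + 2 + 0) % m))
      linarith
    · by_cases hq : p + 2 + 0 < m
      · -- 1 ≤ p ≤ m - 3
        rw [if_neg hp0, if_pos hq]
        have hpl : 1 ≤ p := by omega
        have hpu : p + 2 < m := by omega
        have e1 : (p + 2 + (n - 1)) % m = p - 1 := by
          rw [hmod2 _ (by omega) (by omega)]; omega
        have e0 : (p + 2 + 0) % m = p + 2 := by
          rw [Nat.mod_eq_of_lt (by omega)]
        rw [e1, e0]
        have l1 := hord (p - 1) p (by omega) (by omega)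
        have l2 := hord p (p + 1) (by omega) (by omega)
        have l3 := hord (p + 1) (p + 2) (by omega) hpu
        have hstrict : arg2pi (a (p - 1)) < arg2pi (a (p + 2)) := by
          rcases lt_or_eq_of_le (le_trans l1 (le_trans l2 l3)) with h | h
          · exact h
          · exfalso
            apply hw
            have heq : arg2pi (a p) = arg2pi (a (p + 1)) := by linarith
            have : (p + 1) % m = p + 1 := Nat.mod_eq_of_lt (by omega)
            rw [this]
            exact wedge_eq_zero_of_arg2pi_eq (hne p hp) (hne (p + 1) (by omega)) heq
        linarith
      · -- p + 2 ≥ m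
        rw [if_neg hp0, if_neg hq]
        have l1 := arg2pi_lt_two_pi (a ((p + 2 + (n - 1)) % m))
        have l2 := arg2pi_nonneg (a ((p + 2 + 0) % m))
        linarith
  have hcong : ∀ x y : ℕ, x < n → y < n → b x = b y →
      ∃ g : ℤ, θ x - θ y = g * (2 * Real.pi) := by
    intro x y hx hy hbxy
    have harg : arg2pi (a ((p + 2 + x) % m)) = arg2pi (a ((p + 2 + y) % m)) :=
      congrArg arg2pi hbxy
    rw [hθ]
    dsimp only
    split_ifs with h1 h2 h2
    · exact ⟨0, by rw [harg]; push_cast; ring⟩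
    · exact ⟨-1, by rw [harg]; push_cast; ring⟩
    · exact ⟨1, by rw [harg]; push_cast; ring⟩
    · exact ⟨0, by rw [harg]; push_cast; ring⟩
  have hargw : ∀ x y : ℕ, x < n → y < n → θ x = θ y → wedge (b x) (b y) = 0 := by
    intro x y hx hy hθxy
    have hbx : b x ≠ 0 := hbne x hx
    have hby : b y ≠ 0 := hbne y hy
    rw [hθ] at hθxy
    dsimp only at hθxy
    have l1 := arg2pi_lt_two_pi (a ((p + 2 + x) % m))
    have l2 := arg2pi_nonneg (a ((p + 2 + x) % m))
    have l3 := arg2pi_lt_two_pi (a ((p + 2 + y) % m))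
    have l4 := arg2pi_nonneg (a ((p + 2 + y) % m))
    split_ifs at hθxy with h1 h2 h2
    · exact wedge_eq_zero_of_arg2pi_eq hbx hby hθxy
    · exfalso; linarith
    · exfalso; linarith
    · exact wedge_eq_zero_of_arg2pi_eq hbx hby (by linarith)
  have htot : ∑ d ∈ Finset.range m, a ((p + 2 + d) % m) = 0 := by
    rw [cyclic_sum m hm0 a (p + 2)]; exact hbal
  have hsum : ∑ t ∈ Finset.range n, b t ≠ 0 := by
    have hrange : Finset.range m = Finset.range (n + 2) := by
      rw [show m = n + 2 by omega]
    have htot' := htot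
    rw [hrange, Finset.sum_range_succ, Finset.sum_range_succ] at htot'
    have hbn : a ((p + 2 + (n + 1)) % m) = a ((p + 1) % m) := by
      rw [show p + 2 + (n + 1) = p + 1 + m by omega, Nat.add_mod_right]
    have hbn0 : a ((p + 2 + n) % m) = a p := by
      rw [show p + 2 + n = p + m by omega, Nat.add_mod_right, Nat.mod_eq_of_lt hp]
    rw [hbn, hbn0] at htot'
    intro h0
    have h0' : ∑ x ∈ Finset.range n, a ((p + 2 + x) % m) = 0 := h0
    rw [h0', zero_add] at htot'
    have hneg : a ((p + 1) % m) = - a p := eq_neg_of_add_eq_zero_right htot'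
    apply hw
    rw [hneg, wedge_neg_right]
    have hworig : wedge (a p) (a p) = 0 := by simp [wedge]; ring
    rw [hworig, neg_zero]
  obtain ⟨s, hsr, ⟨u, v, hul, hur, hvl, hvr, hwuv⟩, hSw⟩ :=
    key_window b n r hr2 hrn hbne θ hmono hspread hcong hargw hJnd hsum
  -- the block starts at k
  set k := (p + 2 + s + r) % m with hk
  have hkm : k < m := Nat.mod_lt _ hm0
  have hσ : ∀ d, (k + d) % m = (p + 2 + s + r + d) % m := by
    intro d; rw [hk, Nat.mod_add_mod]
  have hsj : s ≤ j - 1 := by omega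
  have hd1 : (k + (j - 1 - s)) % m = p := by
    rw [hσ, show p + 2 + s + r + (j - 1 - s) = p + m by omega, Nat.add_mod_right,
      Nat.mod_eq_of_lt hp]
  have hd2 : (k + (j - s)) % m = (p + 1) % m := by
    rw [hσ, show p + 2 + s + r + (j - s) = p + 1 + m by omega, Nat.add_mod_right]
  have hwin : ∀ e, (k + (j + 1 + e)) % m = (p + 2 + (s + e)) % m := by
    intro e
    rw [hσ, show p + 2 + s + r + (j + 1 + e) = p + 2 + (s + e) + m by omega,
      Nat.add_mod_right]
  -- block sum = - window sum
  have htot2 : ∑ d ∈ Finset.range m, a ((k + d) % m) = 0 := by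
    rw [cyclic_sum m hm0 a k]; exact hbal
  have hBwin : ∑ d ∈ Finset.Ico (j + 1) m, a ((k + d) % m)
      = ∑ t ∈ Finset.Ico s (s + r), b t := by
    rw [Finset.sum_Ico_eq_sum_range, Finset.sum_Ico_eq_sum_range]
    have hmr : m - (j + 1) = r := by omega
    have hsr' : s + r - s = r := by omega
    rw [hmr, hsr']
    apply Finset.sum_congr rfl
    intro e _
    rw [hwin e]
  have hsplit2 : (∑ d ∈ Finset.range (j + 1), a ((k + d) % m))
      + ∑ d ∈ Finset.Ico (j + 1) m, a ((k + d) % m) = 0 := by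
    rw [Finset.range_eq_Ico, Finset.sum_Ico_consecutive _ (by omega) (by omega)]
    rw [← Finset.range_eq_Ico]
    exact htot2
  have hblocksum : (∑ d ∈ Finset.range (j + 1), a ((k + d) % m)) ≠ 0 := by
    intro h0
    rw [h0, zero_add, hBwin] at hsplit2
    exact hSw hsplit2
  -- the filter set is the image of the window
  have hfilter : @Finset.filter _
      (fun x => ∀ d ∈ Finset.range (j + 1), x ≠ (k + d) % m)
      (fun _ => Finset.decidableDforallFinset) (Finset.range m)
      = (Finset.Ico (j + 1) m).image (fun d => (k + d) % m) := by
    ext x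
    simp only [Finset.mem_filter, Finset.mem_range, Finset.mem_image, Finset.mem_Ico]
    constructor
    · rintro ⟨hxm, hno⟩
      have : x ∈ (Finset.range m).image (fun d => (k + d) % m) := by
        rw [cyc_image m k hm0]; exact Finset.mem_range.2 hxm
      simp only [Finset.mem_image, Finset.mem_range] at this
      obtain ⟨e, hem, hee⟩ := this
      refine ⟨e, ⟨?_, hem⟩, hee⟩
      by_contra hlt
      exact hno e (by omega) hee.symm
    · rintro ⟨e, ⟨he1, he2⟩, rfl⟩
      refine ⟨Nat.mod_lt _ hm0, ?_⟩
      intro d hd hcontra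
      have hed : e = d := cyc_inj k he2 (by omega) hcontra
      omega
  refine ⟨k, hkm, ?_, ?_, hblocksum, ?_, ?_, ?_⟩
  · rcases hi with rfl | rfl
    · refine ⟨j - 1 - s, ?_, hd1⟩
      omega
    · refine ⟨j - s, ?_, hd2⟩
      omega
  · apply span_top_of_wedge hw
    · refine ⟨j - 1 - s, ?_, ?_⟩
      · show j - 1 - s ≤ j
        omega
      · show toR (a ((k + (j - 1 - s)) % m)) = toR (a p)
        rw [hd1]
    · refine ⟨j - s, ?_, ?_⟩
      · show j - s ≤ j
        omega
      · show toR (a ((k + (j - s)) % m)) = toR (a ((p + 1) % m))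
        rw [hd2]
  · intro x hx
    rw [Finset.mem_filter] at hx
    exact hne x (Finset.mem_range.1 hx.1)
  · rw [hfilter, Finset.sum_image (fun x hx y hy hxy =>
      cyc_inj k (Finset.mem_Ico.1 hx).2 (Finset.mem_Ico.1 hy).2 hxy)]
    rw [add_comm]
    exact hsplit2
  · have hx1 : (k + (j + 1 + (u - s))) % m = (p + 2 + u) % m := by
      rw [hwin (u - s), show s + (u - s) = u by omega]
    have hx2 : (k + (j + 1 + (v - s))) % m = (p + 2 + v) % m := by
      rw [hwin (v - s), show s + (v - s) = v by omega]
    have hmem : ∀ w, s ≤ w → w < s + r → toR (a ((p + 2 + w) % m)) ∈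
        ((fun s' => toR (a s')) ''
          {s' | s' < m ∧ ∀ d ∈ Finset.range (j + 1), s' ≠ (k + d) % m}) := by
      intro w hwl hwr
      refine ⟨(p + 2 + w) % m, ⟨Nat.mod_lt _ hm0, ?_⟩, rfl⟩
      intro d hd hcontra
      have hdm : d < j + 1 := Finset.mem_range.1 hd
      have hww : (p + 2 + w) % m = (k + (j + 1 + (w - s))) % m := by
        rw [hwin (w - s), show s + (w - s) = w by omega]
      rw [hww] at hcontra
      have := cyc_inj k (by omega) (by omega) hcontra
      omega
    apply span_top_of_wedge hwuv
    · exact Set.mem_insert_of_mem _ (hmem u hul hur)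
    · exact Set.mem_insert_of_mem _ (hmem v hvl hvr)

lemma Jsum (m : ℕ) (hm : 3 < m) (a : ℕ → ℤ × ℤ)
    (hbal : ∑ k ∈ Finset.range m, a k = 0) (p : ℕ) (hp : p < m) :
    ∑ t ∈ Finset.range (m - 2), a ((p + 2 + t) % m) = -(a p + a ((p + 1) % m)) := by
  have hm0 : 0 < m := by omega
  have htot : ∑ d ∈ Finset.range m, a ((p + 2 + d) % m) = 0 := by
    rw [cyclic_sum m hm0 a (p + 2)]; exact hbal
  have hrange : Finset.range m = Finset.range (m - 2 + 2) :=
    congrArg Finset.range (by omega)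
  rw [hrange, Finset.sum_range_succ, Finset.sum_range_succ,
    show p + 2 + (m - 2) = p + m by omega, Nat.add_mod_right, Nat.mod_eq_of_lt hp,
    show p + 2 + (m - 2 + 1) = p + 1 + m by omega, Nat.add_mod_right, add_assoc] at htot
  exact eq_neg_of_add_eq_zero_left htot


/-- observation (O): for a balanced nondegenerate cyclically
angle-ordered family `Δ = (a₀, …, a_{m−1})` of nonzero vectors of `ℤ²` with
`m > 3`, an index `i` with `a_i` not collinear with `a_{i−1}` or not collinear
with `a_{i+1}`, and `1 ≤ j ≤ m − 3`, there is a cyclic block of `j + 1`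
consecutive vectors containing `a_i`, spanning `ℝ²`, with nonzero sum `a´`, such
that replacing the block by `a´` again yields a family of nonzero vectors that is
balanced and spans `ℝ²`. -/
theorem stmt12 (m : ℕ) (hm : 3 < m) (a : ℕ → ℤ × ℤ)
    (hne : ∀ k < m, a k ≠ 0)
    (hbal : ∑ k ∈ Finset.range m, a k = 0)
    (hspan : Submodule.span ℝ ((fun k => toR (a k)) '' {k | k < m}) = ⊤)
    (hord : ∀ k l : ℕ, k ≤ l → l < m → arg2pi (a k) ≤ arg2pi (a l))
    (i : ℕ) (hi : i < m)
    (hcol : wedge (a ((i + m - 1) % m)) (a i) ≠ 0 ∨ wedge (a i) (a ((i + 1) % m)) ≠ 0)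
    (j : ℕ) (hj1 : 1 ≤ j) (hj2 : j ≤ m - 3) :
    ∃ k < m,
      (∃ d ≤ j, (k + d) % m = i) ∧
      Submodule.span ℝ ((fun d => toR (a ((k + d) % m))) '' {d | d ≤ j}) = ⊤ ∧
      (∑ d ∈ Finset.range (j + 1), a ((k + d) % m)) ≠ 0 ∧
      (∀ s ∈ @Finset.filter _
          (fun s => ∀ d ∈ Finset.range (j + 1), s ≠ (k + d) % m)
          (fun _ => Finset.decidableDforallFinset) (Finset.range m), a s ≠ 0) ∧
      ((∑ s ∈ @Finset.filter _
            (fun s => ∀ d ∈ Finset.range (j + 1), s ≠ (k + d) % m)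
            (fun _ => Finset.decidableDforallFinset) (Finset.range m), a s) +
          ∑ d ∈ Finset.range (j + 1), a ((k + d) % m) = 0) ∧
      Submodule.span ℝ
        (insert (toR (∑ d ∈ Finset.range (j + 1), a ((k + d) % m)))
          ((fun s => toR (a s)) ''
            {s | s < m ∧ ∀ d ∈ Finset.range (j + 1), s ≠ (k + d) % m})) = ⊤ := by
  classical
  have hm0 : 0 < m := by omega
  set p₁ := (i + m - 1) % m with hp₁
  have hp₁m : p₁ < m := Nat.mod_lt _ hm0
  have hp₁succ : (p₁ + 1) % m = i := by
    rw [hp₁, Nat.mod_add_mod, show i + m - 1 + 1 = i + m by omega, Nat.add_mod_right,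
      Nat.mod_eq_of_lt hi]
  have hg₁ : ∀ t : ℕ, (p₁ + 2 + t) % m = (i + 1 + t) % m := by
    intro t
    rw [hp₁, Nat.add_assoc, Nat.mod_add_mod, show i + m - 1 + (2 + t) = i + 1 + t + m by omega,
      Nat.add_mod_right]
  have hsucc_ne : a ((i + 1) % m) ≠ 0 := hne _ (Nat.mod_lt _ hm0)
  have hp₁ne : a p₁ ≠ 0 := hne _ hp₁m
  by_cases hc2 : wedge (a i) (a ((i + 1) % m)) ≠ 0
  · -- i is not collinear with its successor
    by_cases hdeg2 : ∃ u, u < m - 2 ∧ ∃ v, v < m - 2 ∧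
        wedge (a ((i + 2 + u) % m)) (a ((i + 2 + v) % m)) ≠ 0
    · exact main_aux m hm a hne hbal hord j hj1 hj2 i hi hc2 i (Or.inl rfl) hdeg2
    · push_neg at hdeg2
      -- J_i is degenerate; switch to the pair (p₁, i)
      have hS2 : ∑ t ∈ Finset.range (m - 2), a ((i + 2 + t) % m)
          = -(a i + a ((i + 1) % m)) := Jsum m hm a hbal i hi
      have hD : (i + 2 + (m - 3)) % m = p₁ := by
        rw [hp₁, show i + 2 + (m - 3) = i + m - 1 by omega]
      -- first: wedge (a p₁) (a i) ≠ 0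
      have hw1 : wedge (a p₁) (a i) ≠ 0 := by
        intro h0
        -- everything in J₂ is collinear with a i
        have hall : ∀ t, t < m - 2 → wedge (a ((i + 2 + t) % m)) (a i) = 0 := by
          intro t ht
          have h1 : wedge (a ((i + 2 + t) % m)) (a ((i + 2 + (m - 3)) % m)) = 0 :=
            hdeg2 t ht (m - 3) (by omega)
          rw [hD] at h1
          exact wedge_trans h1 h0 hp₁ne
        apply hc2
        have hx : a ((i + 1) % m) = -(∑ t ∈ Finset.range (m - 2), a ((i + 2 + t) % m)) - a i := by
          rw [hS2]; abel
        calc wedge (a i) (a ((i + 1) % m))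
            = - wedge (a ((i + 1) % m)) (a i) := by rw [wedge_anti]
          _ = 0 := by
              rw [hx, wedge_sub_left, wedge_neg_left, wedge_sum_left, wedge_self,
                Finset.sum_eq_zero (fun t ht => hall t (Finset.mem_range.1 ht))]
              ring
      -- second: wedge (a ((i+2) % m)) (a ((i+1) % m)) ≠ 0
      have hnc : wedge (a ((i + 2) % m)) (a ((i + 1) % m)) ≠ 0 := by
        intro h0
        have hall : ∀ t, t < m - 2 → wedge (a ((i + 2 + t) % m)) (a ((i + 1) % m)) = 0 := by
          intro t ht
          have h1 : wedge (a ((i + 2 + t) % m)) (a ((i + 2 + 0) % m)) = 0 :=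
            hdeg2 t ht 0 (by omega)
          have h2 : (i + 2 + 0) % m = (i + 2) % m := by norm_num
          rw [h2] at h1
          exact wedge_trans h1 h0 (hne _ (Nat.mod_lt _ hm0))
        apply hc2
        have hx : a i = -(∑ t ∈ Finset.range (m - 2), a ((i + 2 + t) % m))
            - a ((i + 1) % m) := by
          rw [hS2]; abel
        rw [hx, wedge_sub_left, wedge_neg_left, wedge_sum_left, wedge_self,
          Finset.sum_eq_zero (fun t ht => hall t (Finset.mem_range.1 ht))]
        ring
      -- apply main_aux with p := p₁
      have hw1' : wedge (a p₁) (a ((p₁ + 1) % m)) ≠ 0 := by rw [hp₁succ]; exact hw1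
      have hJnd1 : ∃ u, u < m - 2 ∧ ∃ v, v < m - 2 ∧
          wedge (a ((p₁ + 2 + u) % m)) (a ((p₁ + 2 + v) % m)) ≠ 0 := by
        refine ⟨1, by omega, 0, by omega, ?_⟩
        rw [hg₁ 1, hg₁ 0, show i + 1 + 1 = i + 2 by omega, show i + 1 + 0 = i + 1 by omega]
        exact hnc
      exact main_aux m hm a hne hbal hord j hj1 hj2 p₁ hp₁m hw1' i (Or.inr hp₁succ.symm) hJnd1
  · -- i is collinear with its successor, use the predecessor pair
    push_neg at hc2
    have hc1 : wedge (a p₁) (a i) ≠ 0 := hcol.resolve_right (not_not_intro hc2)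
    have hw1' : wedge (a p₁) (a ((p₁ + 1) % m)) ≠ 0 := by rw [hp₁succ]; exact hc1
    have hJnd1 : ∃ u, u < m - 2 ∧ ∃ v, v < m - 2 ∧
        wedge (a ((p₁ + 2 + u) % m)) (a ((p₁ + 2 + v) % m)) ≠ 0 := by
      by_contra hdeg1
      push_neg at hdeg1
      have hS1 : ∑ t ∈ Finset.range (m - 2), a ((p₁ + 2 + t) % m)
          = -(a p₁ + a ((p₁ + 1) % m)) := Jsum m hm a hbal p₁ hp₁m
      rw [hp₁succ] at hS1
      have hA : (p₁ + 2 + 0) % m = (i + 1) % m := by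
        rw [hg₁ 0]
      have hall : ∀ t, t < m - 2 → wedge (a ((p₁ + 2 + t) % m)) (a i) = 0 := by
        intro t ht
        have h1 : wedge (a ((p₁ + 2 + 0) % m)) (a ((p₁ + 2 + t) % m)) = 0 :=
          hdeg1 0 (by omega) t ht
        rw [hA] at h1
        -- wedge (a i) (a ((i+1)%m)) = 0 and wedge (a (i+1)) (a (g t)) = 0
        have h2 : wedge (a i) (a ((p₁ + 2 + t) % m)) = 0 :=
          wedge_trans hc2 h1 hsucc_ne
        rw [wedge_anti, h2, neg_zero]
      apply hc1
      have hx : a p₁ = -(∑ t ∈ Finset.range (m - 2), a ((p₁ + 2 + t) % m)) - a i := by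
        rw [hS1]; abel
      rw [hx, wedge_sub_left, wedge_neg_left, wedge_sum_left, wedge_self,
        Finset.sum_eq_zero (fun t ht => hall t (Finset.mem_range.1 ht))]
      ring
    exact main_aux m hm a hne hbal hord j hj1 hj2 p₁ hp₁m hw1' i (Or.inr hp₁succ.symm) hJnd1
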